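/- Simultaneous covering lemma (Lemma 3): Let X be a finite alphabet, n ∈ ℕ, Q an n-type on X, and let A_1, …, A_J be nonempty subsets of T_n(Q). Let a = min_{1 ≤ j ≤ J} |A_j|. If k ∈ ℕ satisfies k > a⁻¹ · |T_n(Q)| · log(2·|T_n(Q)|), then there exist permutations π_1, …, π_k of {1,…,n} such that the number of indices j ∈ {1,…,J} for which ⋃_{i=1}^{k} π_i[A_j] = T_n(Q) is at least J/2. -/

import Mathlib

open scoped BigOperators Classical

noncomputable section

/-- A probability mass function on a finite alphabet. -/
def IsPMF {X : Type*} [Fintype X] (p : X → ℝ) : Prop :=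
  (∀ a, 0 ≤ p a) ∧ ∑ a, p a = 1

/-- A (discrete memoryless) channel from `X` to `Y`: every row is a pmf. -/
def IsChannel {X Y : Type*} [Fintype X] [Fintype Y] (W : X → Y → ℝ) : Prop :=
  ∀ x, IsPMF (W x)

/-- Empirical distribution (type) of a sequence `x : Fin n → X`. -/
def empDist {X : Type*} [Fintype X] {n : ℕ} (x : Fin n → X) (a : X) : ℝ :=
  ((Finset.univ.filter fun t => x t = a).card : ℝ) / n

/-- `P` is an `n`-type on `X`: a pmf all of whose masses are multiples of `1/n`. -/
def IsNType {X : Type*} [Fintype X] (n : ℕ) (P : X → ℝ) : Prop :=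
  IsPMF P ∧ ∀ a, ∃ k : ℕ, (n : ℝ) * P a = k

/-- The type class `T_n(P)`: all sequences with empirical distribution `P`. -/
def typeClass {X : Type*} [Fintype X] (n : ℕ) (P : X → ℝ) : Finset (Fin n → X) :=
  Finset.univ.filter fun x => empDist x = P

/-- Shannon entropy (natural logarithm). -/
def shEntropy {X : Type*} [Fintype X] (p : X → ℝ) : ℝ :=
  ∑ a, Real.negMulLog (p a)

/-- Kullback–Leibler divergence (real-valued, with the usual `log` conventions). -/
def dKL {X : Type*} [Fintype X] (q p : X → ℝ) : ℝ :=
  ∑ a, q a * Real.log (q a / p a)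

/-- Conditional KL divergence `D(V‖W|P)`. -/
def condDKL {X Y : Type*} [Fintype X] [Fintype Y] (V W : X → Y → ℝ) (P : X → ℝ) : ℝ :=
  ∑ x, P x * dKL (V x) (W x)

def margFst {X Y : Type*} [Fintype X] [Fintype Y] (Q : X × Y → ℝ) (x : X) : ℝ :=
  ∑ y, Q (x, y)

def margSnd {X Y : Type*} [Fintype X] [Fintype Y] (Q : X × Y → ℝ) (y : Y) : ℝ :=
  ∑ x, Q (x, y)

/-- Mutual information of a joint pmf (natural logarithm). -/
def mutualInfo {X Y : Type*} [Fintype X] [Fintype Y] (Q : X × Y → ℝ) : ℝ :=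
  ∑ x, ∑ y, Q (x, y) * Real.log (Q (x, y) / (margFst Q x * margSnd Q y))

/-- Mutual information `I(P, V)` of the joint pmf `P(x)·V(y|x)`. -/
def miPV {X Y : Type*} [Fintype X] [Fintype Y] (P : X → ℝ) (V : X → Y → ℝ) : ℝ :=
  mutualInfo fun p => P p.1 * V p.1 p.2

/-- Positive part `|a|⁺ = max (a, 0)`. -/
def plusPart (a : ℝ) : ℝ := max a 0

def margXY {X Y U : Type*} [Fintype X] [Fintype Y] [Fintype U] (Q : X × Y × U → ℝ) :
    X × Y → ℝ := fun p => ∑ u, Q (p.1, p.2, u)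

def margYU {X Y U : Type*} [Fintype X] [Fintype Y] [Fintype U] (Q : X × Y × U → ℝ) :
    Y × U → ℝ := fun p => ∑ x, Q (x, p.1, p.2)

def margXU {X Y U : Type*} [Fintype X] [Fintype Y] [Fintype U] (Q : X × Y × U → ℝ) :
    X × U → ℝ := fun p => ∑ y, Q (p.1, y, p.2)

def margX3 {X Y U : Type*} [Fintype X] [Fintype Y] [Fintype U] (Q : X × Y × U → ℝ)
    (x : X) : ℝ := ∑ y, ∑ u, Q (x, y, u)

def margY3 {X Y U : Type*} [Fintype X] [Fintype Y] [Fintype U] (Q : X × Y × U → ℝ)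
    (y : Y) : ℝ := ∑ x, ∑ u, Q (x, y, u)

/-- Conditional mutual information `I_Q(X;U|Y)` of a joint pmf `Q` on `X × Y × U`. -/
def condMI3 {X Y U : Type*} [Fintype X] [Fintype Y] [Fintype U] (Q : X × Y × U → ℝ) : ℝ :=
  ∑ x, ∑ y, ∑ u, Q (x, y, u) *
    Real.log (Q (x, y, u) * margY3 Q y / (margXY Q (x, y) * margYU Q (y, u)))

/-- `D(Q_{Y|X} ‖ W | P)` written via the joint pmf `Q_{XY}` (whose `X`-marginal is `P`). -/
def condDKLJoint {X Y : Type*} [Fintype X] [Fintype Y] (QXY : X × Y → ℝ)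
    (W : X → Y → ℝ) (P : X → ℝ) : ℝ :=
  ∑ x, ∑ y, QXY (x, y) * Real.log (QXY (x, y) / (P x * W x y))

/-- Number of messages `M_n = ⌈exp (n R)⌉`. -/
def Mn (R : ℝ) (n : ℕ) : ℕ := ⌈Real.exp (n * R)⌉₊

/-- All codebooks of `M` codewords, each of constant composition `P`. -/
def ccCodebooks {X : Type*} [Fintype X] (n M : ℕ) (P : X → ℝ) :
    Finset (Fin M → Fin n → X) :=
  Finset.univ.filter fun C => ∀ m, C m ∈ typeClass n P

/-- Ensemble-average decoding error probability of an `(n,R,B)`-code for the IB channel: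
the expectation, over a codebook drawn uniformly from the constant composition ensemble of
type `P`, of the average over messages `m` of the probability (under the memoryless channel
`W`) that the decoder output differs from `m` when codeword `C m` is sent. -/
def avgError {X Y L : Type*} [Fintype X] [Fintype Y] (W : X → Y → ℝ) (n M : ℕ)
    (P : X → ℝ) (φ : (Fin n → Y) → L) (ψ : L → (Fin M → Fin n → X) → Fin M) : ℝ :=
  (∑ C ∈ ccCodebooks n M P, (M : ℝ)⁻¹ * ∑ m : Fin M, ∑ y : Fin n → Y,
      if ψ (φ y) C = m then 0 else ∏ t, W (C m t) (y t)) /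
    ((ccCodebooks n M P).card : ℝ)



section SimCovAux

variable {X : Type*} [Fintype X] {n : ℕ} {Q : X → ℝ}

private lemma scov_fiberCard_eq {x z : Fin n → X} (hx : x ∈ typeClass n Q)
    (hz : z ∈ typeClass n Q) (a : X) :
    (Finset.univ.filter fun t => x t = a).card = (Finset.univ.filter fun t => z t = a).card := by
  simp only [typeClass, Finset.mem_filter, Finset.mem_univ, true_and] at hx hz
  rcases Nat.eq_zero_or_pos n with h0 | hpos
  · subst h0
    simp [Finset.card_eq_zero, Finset.eq_empty_iff_forall_notMem]
  · have := congrArg (fun f => f a) (hx.trans hz.symm)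
    simp only [empDist] at this
    have hn : (n : ℝ) ≠ 0 := Nat.cast_ne_zero.mpr hpos.ne'
    field_simp at this
    exact_mod_cast this

private lemma scov_comp_mem {x : Fin n → X} (hx : x ∈ typeClass n Q)
    (π : Equiv.Perm (Fin n)) : x ∘ π ∈ typeClass n Q := by
  simp only [typeClass, Finset.mem_filter, Finset.mem_univ, true_and] at hx ⊢
  rw [← hx]
  funext a
  unfold empDist
  congr 2
  apply Finset.card_bij (fun t _ => π t)
  · intro t ht
    simp only [Finset.mem_filter, Finset.mem_univ, true_and, Function.comp_apply] at ht ⊢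
    exact ht
  · intro t1 _ t2 _ h; exact π.injective h
  · intro t ht
    simp only [Finset.mem_filter, Finset.mem_univ, true_and, Function.comp_apply] at ht ⊢
    exact ⟨π.symm t, by simpa using ht, by simp⟩

private lemma scov_exists_perm {x z : Fin n → X} (hx : x ∈ typeClass n Q)
    (hz : z ∈ typeClass n Q) : ∃ π : Equiv.Perm (Fin n), x ∘ π = z := by
  have key : ∀ a, Fintype.card {t // z t = a} = Fintype.card {t // x t = a} := by
    intro a
    rw [Fintype.card_subtype, Fintype.card_subtype]
    exact scov_fiberCard_eq hz hx a
  let e : ∀ a, {t // z t = a} ≃ {t // x t = a} := fun a => Fintype.equivOfCardEq (key a)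
  let π : Equiv.Perm (Fin n) :=
    ((Equiv.sigmaFiberEquiv z).symm.trans (Equiv.sigmaCongrRight e)).trans
      (Equiv.sigmaFiberEquiv x)
  refine ⟨π, funext fun t => ?_⟩
  show x (π t) = z t
  have h1 : (Equiv.sigmaFiberEquiv z).symm t = ⟨z t, ⟨t, rfl⟩⟩ := rfl
  have h2 : π t = (e (z t) ⟨t, rfl⟩).1 := by
    simp only [π, Equiv.trans_apply, h1, Equiv.sigmaCongrRight_apply, Equiv.sigmaFiberEquiv]
    rfl
  rw [h2]
  exact (e (z t) ⟨t, rfl⟩).2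

private lemma scov_fib_card_eq {z x y : Fin n → X}
    (hzx : ∃ τ : Equiv.Perm (Fin n), z ∘ ⇑τ = x)
    (hzy : ∃ τ : Equiv.Perm (Fin n), z ∘ ⇑τ = y) :
    (Finset.univ.filter fun σ : Equiv.Perm (Fin n) => z ∘ ⇑σ = x).card =
    (Finset.univ.filter fun σ : Equiv.Perm (Fin n) => z ∘ ⇑σ = y).card := by
  obtain ⟨τx, hτx⟩ := hzx
  obtain ⟨τy, hτy⟩ := hzy
  apply Finset.card_bij' (fun σ _ => σ * τx⁻¹ * τy) (fun σ _ => σ * τy⁻¹ * τx)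
  · intro σ hσ
    simp only [Finset.mem_filter, Finset.mem_univ, true_and] at hσ ⊢
    funext t
    simp only [Function.comp_apply, Equiv.Perm.mul_apply]
    have h1 : z (σ (τx⁻¹ (τy t))) = x (τx⁻¹ (τy t)) := congrFun hσ _
    have h2 : x (τx⁻¹ (τy t)) = z (τx (τx⁻¹ (τy t))) := (congrFun hτx _).symm
    have h3 : z (τy t) = y t := congrFun hτy t
    rw [← Equiv.Perm.mul_apply τx τx⁻¹, mul_inv_cancel, Equiv.Perm.one_apply] at h2
    rw [h1, h2, h3]
  · intro σ hσ
    simp only [Finset.mem_filter, Finset.mem_univ, true_and] at hσ ⊢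
    funext t
    simp only [Function.comp_apply, Equiv.Perm.mul_apply]
    have h1 : z (σ (τy⁻¹ (τx t))) = y (τy⁻¹ (τx t)) := congrFun hσ _
    have h2 : y (τy⁻¹ (τx t)) = z (τy (τy⁻¹ (τx t))) := (congrFun hτy _).symm
    have h3 : z (τx t) = x t := congrFun hτx t
    rw [← Equiv.Perm.mul_apply τy τy⁻¹, mul_inv_cancel, Equiv.Perm.one_apply] at h2
    rw [h1, h2, h3]
  · intro σ _; group
  · intro σ _; group

private lemma scov_fib_inv (z x : Fin n → X) :
    (Finset.univ.filter fun σ : Equiv.Perm (Fin n) => z ∘ ⇑σ = x).card =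
    (Finset.univ.filter fun σ : Equiv.Perm (Fin n) => x ∘ ⇑σ = z).card := by
  refine Finset.card_bij' (fun σ _ => σ⁻¹) (fun σ _ => σ⁻¹) ?_ ?_ (fun σ _ => by simp)
    (fun σ _ => by simp) <;>
  · intro σ hσ
    simp only [Finset.mem_filter, Finset.mem_univ, true_and] at hσ ⊢
    funext t
    have := congrFun hσ (σ⁻¹ t)
    simp only [Function.comp_apply, Equiv.Perm.coe_inv, Equiv.apply_symm_apply] at this ⊢
    exact this.symm

end SimCovAux

private lemma scov_key_ineq (N a c k : ℕ) (hN : 1 ≤ N) (ha : 1 ≤ a) (haN : a ≤ N)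
    (hc : 1 ≤ c)
    (hk : ((a : ℝ))⁻¹ * (N : ℝ) * Real.log (2 * (N : ℝ)) < (k : ℝ)) :
    (N : ℝ) * (((c * N - a * c : ℕ) : ℝ)) ^ k < (((c * N : ℕ) : ℝ)) ^ k / 2 := by
  have hN0 : (0 : ℝ) < N := by exact_mod_cast hN
  have ha0 : (0 : ℝ) < a := by exact_mod_cast ha
  have hc0 : (0 : ℝ) < c := by exact_mod_cast hc
  have haN' : (a : ℝ) ≤ N := by exact_mod_cast haN
  have hac : a * c ≤ c * N := by nlinarith
  rw [Nat.cast_sub hac]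
  push_cast
  have hk' : Real.log (2 * (N : ℝ)) < (a : ℝ) / N * k := by
    have h0 : Real.log (2 * (N : ℝ)) = (a : ℝ) / N * ((a : ℝ)⁻¹ * N * Real.log (2 * N)) := by
      field_simp
    rw [h0]
    exact mul_lt_mul_of_pos_left hk (by positivity)
  have h1 : 1 - (a : ℝ) / N ≤ Real.exp (-((a : ℝ) / N)) := by
    have := Real.add_one_le_exp (-((a : ℝ) / N))
    linarith
  have h1' : 0 ≤ 1 - (a : ℝ) / N := by
    rw [sub_nonneg]
    exact (div_le_one hN0).mpr haN'
  have h2 : (1 - (a : ℝ) / N) ^ k ≤ Real.exp (-((a : ℝ) / N) * k) := by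
    calc (1 - (a : ℝ) / N) ^ k ≤ (Real.exp (-((a : ℝ) / N))) ^ k :=
          pow_le_pow_left₀ h1' h1 k
      _ = Real.exp (-((a : ℝ) / N) * k) := by
          rw [← Real.exp_nat_mul]; ring_nf
  have h3 : Real.exp (-((a : ℝ) / N) * k) < (2 * (N : ℝ))⁻¹ := by
    have hlt : -((a : ℝ) / N) * k < -Real.log (2 * N) := by nlinarith
    calc Real.exp (-((a : ℝ) / N) * k) < Real.exp (-Real.log (2 * N)) :=
          Real.exp_lt_exp.mpr hlt
      _ = (2 * (N : ℝ))⁻¹ := by rw [Real.exp_neg, Real.exp_log (by positivity)]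
  have h4 : (N : ℝ) * (1 - (a : ℝ) / N) ^ k < 1 / 2 := by
    have h5 : (N : ℝ) * (1 - (a : ℝ) / N) ^ k ≤ (N : ℝ) * Real.exp (-((a : ℝ) / N) * k) :=
      mul_le_mul_of_nonneg_left h2 hN0.le
    have h6 : (N : ℝ) * Real.exp (-((a : ℝ) / N) * k) < (N : ℝ) * (2 * (N : ℝ))⁻¹ :=
      mul_lt_mul_of_pos_left h3 hN0
    have h7 : (N : ℝ) * (2 * (N : ℝ))⁻¹ = 1 / 2 := by
      field_simp
    linarith
  have hexp : (c : ℝ) * N - (a : ℝ) * c = ((c : ℝ) * N) * (1 - (a : ℝ) / N) := by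
    field_simp
  rw [hexp, mul_pow]
  have hcN : (0 : ℝ) < ((c : ℝ) * N) ^ k := by positivity
  calc (N : ℝ) * (((c : ℝ) * N) ^ k * (1 - (a : ℝ) / N) ^ k)
      = ((c : ℝ) * N) ^ k * ((N : ℝ) * (1 - (a : ℝ) / N) ^ k) := by ring
    _ < ((c : ℝ) * N) ^ k * (1 / 2) := mul_lt_mul_of_pos_left h4 hcN
    _ = ((c : ℝ) * N) ^ k / 2 := by ring

/-- **Lemma 3** (simultaneous covering): if `A_1, …, A_J` are nonempty subsets of the type
class `T_n(Q)` and `k > a⁻¹·|T_n(Q)|·log (2·|T_n(Q)|)` where `a = min_j |A_j|` (expressed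
equivalently by requiring the bound for every `j`), then there is a single sequence of
permutations `π_1, …, π_k` under which at least half of the sets `A_j` cover `T_n(Q)`. -/
theorem simultaneous_covering
    {X : Type*} [Fintype X] (n : ℕ) (Q : X → ℝ) (hQ : IsNType n Q)
    (J : ℕ) (A : Fin J → Finset (Fin n → X))
    (hA : ∀ j, A j ⊆ typeClass n Q) (hne : ∀ j, (A j).Nonempty)
    (k : ℕ)
    (hk : ∀ j, (((A j).card : ℝ))⁻¹ * ((typeClass n Q).card : ℝ) *
      Real.log (2 * ((typeClass n Q).card : ℝ)) < k) :
    ∃ π : Fin k → Equiv.Perm (Fin n),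
      (J : ℝ) / 2 ≤
        ((Finset.univ.filter fun j : Fin J =>
          (Finset.univ.biUnion fun i => (A j).image fun x => x ∘ (π i)) =
            typeClass n Q).card : ℝ) := by
  classical
  rcases Nat.eq_zero_or_pos J with hJ | hJ
  · subst hJ; exact ⟨fun _ => 1, by simp⟩
  obtain ⟨j₀⟩ : Nonempty (Fin J) := ⟨⟨0, hJ⟩⟩
  obtain ⟨z₀, hz₀A⟩ := hne j₀
  have hz₀ : z₀ ∈ typeClass n Q := hA j₀ hz₀A
  set N := (typeClass n Q).card with hNdef
  have hN1 : 1 ≤ N := Finset.card_pos.mpr ⟨z₀, hz₀⟩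
  set c := (Finset.univ.filter fun σ : Equiv.Perm (Fin n) => z₀ ∘ ⇑σ = z₀).card with hcdef
  have fib : ∀ z ∈ typeClass n Q, ∀ x ∈ typeClass n Q,
      (Finset.univ.filter fun σ : Equiv.Perm (Fin n) => z ∘ ⇑σ = x).card = c := by
    intro z hz x hx
    calc (Finset.univ.filter fun σ : Equiv.Perm (Fin n) => z ∘ ⇑σ = x).card
        = (Finset.univ.filter fun σ : Equiv.Perm (Fin n) => z ∘ ⇑σ = z₀).card :=
          scov_fib_card_eq (scov_exists_perm hz hx) (scov_exists_perm hz hz₀)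
      _ = (Finset.univ.filter fun σ : Equiv.Perm (Fin n) => z₀ ∘ ⇑σ = z).card :=
          scov_fib_inv z z₀
      _ = c := scov_fib_card_eq (scov_exists_perm hz₀ hz) (scov_exists_perm hz₀ hz₀)
  have hG : Fintype.card (Equiv.Perm (Fin n)) = c * N := by
    have hfw := Finset.card_eq_sum_card_fiberwise
      (f := fun σ : Equiv.Perm (Fin n) => z₀ ∘ ⇑σ) (s := Finset.univ) (t := typeClass n Q)
      (fun σ _ => scov_comp_mem hz₀ σ)
    rw [Finset.card_univ] at hfw
    rw [hfw, Finset.sum_congr rfl (fun x hx => fib z₀ hz₀ x hx), Finset.sum_const,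
      smul_eq_mul, mul_comm]
  have hc1 : 1 ≤ c := by
    have hGpos : 0 < Fintype.card (Equiv.Perm (Fin n)) := Fintype.card_pos
    rw [hG] at hGpos
    rcases Nat.eq_zero_or_pos c with h | h
    · simp [h] at hGpos
    · exact h
  have countA : ∀ j, ∀ z ∈ typeClass n Q,
      (Finset.univ.filter fun σ : Equiv.Perm (Fin n) => z ∘ ⇑σ ∈ A j).card = (A j).card * c := by
    intro j z hz
    rw [Finset.card_eq_sum_card_fiberwise
      (f := fun σ : Equiv.Perm (Fin n) => z ∘ ⇑σ) (t := A j)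
      (s := Finset.univ.filter fun σ : Equiv.Perm (Fin n) => z ∘ ⇑σ ∈ A j)
      (fun σ hσ => (Finset.mem_filter.mp (Finset.mem_coe.mp hσ)).2)]
    rw [Finset.sum_congr rfl (fun x hx => ?_), Finset.sum_const, smul_eq_mul]
    have hset : (Finset.univ.filter fun σ : Equiv.Perm (Fin n) => z ∘ ⇑σ ∈ A j).filter
        (fun σ : Equiv.Perm (Fin n) => z ∘ ⇑σ = x) = Finset.univ.filter fun σ : Equiv.Perm (Fin n) => z ∘ ⇑σ = x := by
      ext σ
      simp only [Finset.mem_filter, Finset.mem_univ, true_and]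
      constructor
      · exact fun h => h.2
      · intro h; exact ⟨h ▸ hx, h⟩
    rw [hset]
    exact fib z hz x (hA j hx)
  have countIm : ∀ j, ∀ z ∈ typeClass n Q,
      (Finset.univ.filter fun σ : Equiv.Perm (Fin n) =>
        z ∈ (A j).image fun x => x ∘ ⇑σ).card = (A j).card * c := by
    intro j z hz
    have him : ∀ σ : Equiv.Perm (Fin n),
        (z ∈ (A j).image fun x => x ∘ ⇑σ) ↔ z ∘ ⇑σ⁻¹ ∈ A j := by
      intro σ
      constructor
      · intro hm
        obtain ⟨x, hxA, hx⟩ := Finset.mem_image.mp hm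
        have hxe : z ∘ ⇑σ⁻¹ = x := by
          funext t
          have := congrFun hx (σ⁻¹ t)
          simp only [Function.comp_apply, Equiv.Perm.coe_inv, Equiv.apply_symm_apply] at this ⊢
          exact this.symm
        rwa [hxe]
      · intro h
        refine Finset.mem_image.mpr ⟨z ∘ ⇑σ⁻¹, h, ?_⟩
        funext t
        simp
    have hre : (Finset.univ.filter fun σ : Equiv.Perm (Fin n) =>
        z ∈ (A j).image fun x => x ∘ ⇑σ) =
        (Finset.univ.filter fun σ : Equiv.Perm (Fin n) => z ∘ ⇑σ⁻¹ ∈ A j) := by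
      ext σ
      simp only [Finset.mem_filter, Finset.mem_univ, true_and]
      exact him σ
    rw [hre]
    have hbij : (Finset.univ.filter fun σ : Equiv.Perm (Fin n) => z ∘ ⇑σ⁻¹ ∈ A j).card =
        (Finset.univ.filter fun σ : Equiv.Perm (Fin n) => z ∘ ⇑σ ∈ A j).card := by
      refine Finset.card_bij' (fun σ _ => σ⁻¹) (fun σ _ => σ⁻¹) ?_ ?_ (fun σ _ => by simp)
        (fun σ _ => by simp) <;>
      · intro σ hσ
        simp only [Finset.mem_filter, Finset.mem_univ, true_and] at hσ ⊢
        simpa using hσ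
    rw [hbij]
    exact countA j z hz
  set BadT : Fin J → Finset (Fin k → Equiv.Perm (Fin n)) := fun j =>
    Finset.univ.filter fun π =>
      ¬ ((Finset.univ.biUnion fun i => (A j).image fun x => x ∘ (π i)) = typeClass n Q)
    with hBadT
  have hbadcard : ∀ j, (BadT j).card ≤
      N * (Fintype.card (Equiv.Perm (Fin n)) - (A j).card * c) ^ k := by
    intro j
    have hsub : BadT j ⊆ (typeClass n Q).biUnion fun z =>
        Fintype.piFinset fun _ : Fin k =>
          (Finset.univ.filter fun σ : Equiv.Perm (Fin n) =>
            z ∈ (A j).image fun x => x ∘ ⇑σ)ᶜ := by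
      intro π hπ
      rw [hBadT] at hπ
      rw [Finset.mem_filter] at hπ
      have hne' := hπ.2
      have hsub2 : (Finset.univ.biUnion fun i => (A j).image fun x => x ∘ (π i)) ⊆
          typeClass n Q := by
        intro y hy
        obtain ⟨i, _, hy2⟩ := Finset.mem_biUnion.mp hy
        obtain ⟨x, hxA, rfl⟩ := Finset.mem_image.mp hy2
        exact scov_comp_mem (hA j hxA) (π i)
      obtain ⟨z, hzT, hzn⟩ : ∃ z ∈ typeClass n Q,
          z ∉ Finset.univ.biUnion fun i => (A j).image fun x => x ∘ (π i) := by
        by_contra h'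
        push_neg at h'
        exact hne' (Finset.Subset.antisymm hsub2 h')
      refine Finset.mem_biUnion.mpr ⟨z, hzT, ?_⟩
      rw [Fintype.mem_piFinset]
      intro i
      rw [Finset.mem_compl, Finset.mem_filter]
      intro hmem
      exact hzn (Finset.mem_biUnion.mpr ⟨i, Finset.mem_univ i, hmem.2⟩)
    calc (BadT j).card ≤ _ := Finset.card_le_card hsub
      _ ≤ ∑ z ∈ typeClass n Q, (Fintype.piFinset fun _ : Fin k =>
            (Finset.univ.filter fun σ : Equiv.Perm (Fin n) =>
              z ∈ (A j).image fun x => x ∘ ⇑σ)ᶜ).card := Finset.card_biUnion_le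
      _ = ∑ z ∈ typeClass n Q,
            (Fintype.card (Equiv.Perm (Fin n)) - (A j).card * c) ^ k := by
          refine Finset.sum_congr rfl fun z hz => ?_
          rw [Fintype.card_piFinset]
          rw [Finset.prod_congr rfl (fun i _ => ?_), Finset.prod_const, Finset.card_univ,
            Fintype.card_fin]
          rw [Finset.card_compl, countIm j z hz]
      _ = N * (Fintype.card (Equiv.Perm (Fin n)) - (A j).card * c) ^ k := by
          rw [Finset.sum_const, smul_eq_mul]
  by_contra hcon
  push_neg at hcon
  set P : Fin J → (Fin k → Equiv.Perm (Fin n)) → Prop := fun j π =>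
    (Finset.univ.biUnion fun i => (A j).image fun x => x ∘ (π i)) = typeClass n Q with hP
  have hswap : ∑ π : Fin k → Equiv.Perm (Fin n),
      (Finset.univ.filter fun j : Fin J => ¬ P j π).card = ∑ j : Fin J, (BadT j).card := by
    have h1 : ∀ π : Fin k → Equiv.Perm (Fin n),
        (Finset.univ.filter fun j : Fin J => ¬ P j π).card =
        ∑ j : Fin J, if ¬ P j π then 1 else 0 := fun π => Finset.card_filter _ _
    have h2 : ∀ j, (BadT j).card =
        ∑ π : Fin k → Equiv.Perm (Fin n), if ¬ P j π then 1 else 0 := fun j =>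
      Finset.card_filter _ _
    simp only [h1, h2]
    exact Finset.sum_comm
  have hsplit : ∀ π : Fin k → Equiv.Perm (Fin n),
      (Finset.univ.filter fun j : Fin J => P j π).card +
      (Finset.univ.filter fun j : Fin J => ¬ P j π).card = J := by
    intro π
    rw [Finset.card_filter_add_card_filter_not, Finset.card_univ, Fintype.card_fin]
  have hGpos : 0 < Fintype.card (Equiv.Perm (Fin n)) := Fintype.card_pos
  set S : ℝ := ((Fintype.card (Equiv.Perm (Fin n)) : ℝ)) ^ k with hS
  have hupper : (∑ j : Fin J, ((BadT j).card : ℝ)) < (J : ℝ) * (S / 2) := by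
    have hterm : ∀ j ∈ (Finset.univ : Finset (Fin J)), ((BadT j).card : ℝ) < S / 2 := by
      intro j _
      have ha1 : 1 ≤ (A j).card := Finset.card_pos.mpr (hne j)
      have haN : (A j).card ≤ N := Finset.card_le_card (hA j)
      have hkey := scov_key_ineq N (A j).card c k hN1 ha1 haN hc1 (hk j)
      have hcast : ((BadT j).card : ℝ) ≤
          (N : ℝ) * (((Fintype.card (Equiv.Perm (Fin n)) - (A j).card * c : ℕ)) : ℝ) ^ k := by
        have hb := hbadcard j
        calc ((BadT j).card : ℝ) ≤
            ((N * (Fintype.card (Equiv.Perm (Fin n)) - (A j).card * c) ^ k : ℕ) : ℝ) := by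
              exact_mod_cast hb
          _ = _ := by push_cast; ring
      have heq1 : (Fintype.card (Equiv.Perm (Fin n)) - (A j).card * c : ℕ) =
          (c * N - (A j).card * c : ℕ) := by rw [hG]
      have heq2 : ((c * N : ℕ) : ℝ) ^ k = S := by rw [hS, hG]
      rw [heq1] at hcast
      calc ((BadT j).card : ℝ) ≤ _ := hcast
        _ < (((c * N : ℕ)) : ℝ) ^ k / 2 := hkey
        _ = S / 2 := by rw [heq2]
    calc (∑ j : Fin J, ((BadT j).card : ℝ)) < ∑ _j : Fin J, S / 2 :=
        Finset.sum_lt_sum_of_nonempty ⟨j₀, Finset.mem_univ j₀⟩ hterm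
      _ = (J : ℝ) * (S / 2) := by rw [Finset.sum_const, Finset.card_univ, Fintype.card_fin,
          nsmul_eq_mul]
  have hlower : S * ((J : ℝ) / 2) < ∑ π : Fin k → Equiv.Perm (Fin n),
      (((Finset.univ.filter fun j : Fin J => ¬ P j π).card : ℝ)) := by
    have hterm : ∀ π ∈ (Finset.univ : Finset (Fin k → Equiv.Perm (Fin n))),
        (J : ℝ) / 2 < ((Finset.univ.filter fun j : Fin J => ¬ P j π).card : ℝ) := by
      intro π _
      have h1 := hcon π
      have h2 := hsplit π
      have h3 : ((Finset.univ.filter fun j : Fin J => P j π).card : ℝ) +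
          ((Finset.univ.filter fun j : Fin J => ¬ P j π).card : ℝ) = (J : ℝ) := by
        exact_mod_cast h2
      linarith
    calc S * ((J : ℝ) / 2)
        = ∑ _π : Fin k → Equiv.Perm (Fin n), (J : ℝ) / 2 := by
          rw [Finset.sum_const, Finset.card_univ, Fintype.card_fun, Fintype.card_fin,
            nsmul_eq_mul, hS]
          push_cast
          ring
      _ < _ := Finset.sum_lt_sum_of_nonempty ⟨fun _ => 1, Finset.mem_univ _⟩ hterm
  have hcastsum : (∑ π : Fin k → Equiv.Perm (Fin n),
      (((Finset.univ.filter fun j : Fin J => ¬ P j π).card : ℝ))) =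
      ∑ j : Fin J, ((BadT j).card : ℝ) := by
    exact_mod_cast congrArg (Nat.cast : ℕ → ℝ) hswap
  rw [hcastsum] at hlower
  have hfin : S * ((J : ℝ) / 2) = (J : ℝ) * (S / 2) := by ring
  linarith

end
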